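/- Every normal subgroup of ZM(m,n,r) is of the form ⟨a^{m₁}, b^{n₁}⟩ for some divisors n₁ | n and m₁ | gcd(m, r^{n₁} − 1); conversely each such subgroup is normal. In particular, for each pair (m₁, n₁) with m₁ | m and n₁ | n, ZM(m,n,r) has at most one normal subgroup of order mn/(m₁n₁). -/

import Mathlib

def ZMrels (m n : ℕ) (r : ℤ) : Set (FreeGroup Bool) :=
  {FreeGroup.of true ^ m, FreeGroup.of false ^ n,
   (FreeGroup.of false)⁻¹ * FreeGroup.of true * FreeGroup.of false * (FreeGroup.of true) ^ (-r)}

abbrev ZM (m n : ℕ) (r : ℤ) : Type := PresentedGroup (ZMrels m n r)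

def ZMa (m n : ℕ) (r : ℤ) : ZM m n r := PresentedGroup.of true

def ZMb (m n : ℕ) (r : ℤ) : ZM m n r := PresentedGroup.of false

namespace ZMW

variable (m n : ℕ) (r : ℤ)

lemma mk_rel_eq_one {x : FreeGroup Bool} (h : x ∈ ZMrels m n r) :
    PresentedGroup.mk (ZMrels m n r) x = 1 := by
  apply (QuotientGroup.eq_one_iff _).2
  exact Subgroup.subset_normalClosure h

lemma ha : ZMa m n r ^ m = 1 := by
  have := mk_rel_eq_one m n r (x := FreeGroup.of true ^ m) (by left; rfl)
  simpa [ZMa, PresentedGroup.of, map_pow] using this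

lemma hb : ZMb m n r ^ n = 1 := by
  have := mk_rel_eq_one m n r (x := FreeGroup.of false ^ n) (by right; left; rfl)
  simpa [ZMb, PresentedGroup.of, map_pow] using this

lemma hrel : (ZMb m n r)⁻¹ * ZMa m n r * ZMb m n r = ZMa m n r ^ r := by
  have := mk_rel_eq_one m n r
    (x := (FreeGroup.of false)⁻¹ * FreeGroup.of true * FreeGroup.of false *
      (FreeGroup.of true) ^ (-r)) (by right; right; rfl)
  rw [map_mul, map_mul, map_mul, map_zpow, map_inv] at this
  have h2 : (ZMb m n r)⁻¹ * ZMa m n r * ZMb m n r * (ZMa m n r) ^ (-r) = 1 := this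
  rw [zpow_neg] at h2
  exact (mul_inv_eq_one.mp h2)


lemma conj_b (k : ℤ) :
    (ZMb m n r)⁻¹ * (ZMa m n r) ^ k * ZMb m n r = (ZMa m n r) ^ (r * k) := by
  have : (ZMb m n r)⁻¹ * (ZMa m n r) ^ k * ZMb m n r
      = ((ZMb m n r)⁻¹ * ZMa m n r * ZMb m n r) ^ k := by
    rw [← MulAut.conj_symm_apply (g := ZMb m n r)]
    simp [map_zpow]
  rw [this, hrel, ← zpow_mul]

lemma conj_bpow (v : ℕ) (k : ℤ) :
    ((ZMb m n r) ^ v)⁻¹ * (ZMa m n r) ^ k * (ZMb m n r) ^ v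
      = (ZMa m n r) ^ (r ^ v * k) := by
  induction v generalizing k with
  | zero => simp
  | succ w ih =>
      have : ((ZMb m n r) ^ (w + 1))⁻¹ * (ZMa m n r) ^ k * (ZMb m n r) ^ (w + 1)
          = ((ZMb m n r) ^ w)⁻¹ * ((ZMb m n r)⁻¹ * (ZMa m n r) ^ k * (ZMb m n r))
            * (ZMb m n r) ^ w := by
        rw [pow_succ, mul_inv_rev]
        group
      rw [this, conj_b, ih]
      congr 1
      ring

-- b^(n*q) = 1
lemma hb_zpow_mul (q : ℤ) : (ZMb m n r) ^ ((n : ℤ) * q) = 1 := by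
  rw [zpow_mul, zpow_natCast, hb, one_zpow]

lemma hb_zpow_eq_of_dvd {j j' : ℤ} (h : (n : ℤ) ∣ j - j') :
    (ZMb m n r) ^ j = (ZMb m n r) ^ j' := by
  obtain ⟨q, hq⟩ := h
  have : j = j' + n * q := by linarith
  rw [this, zpow_add, hb_zpow_mul, mul_one]

lemma ha_zpow_eq_of_dvd {i i' : ℤ} (h : (m : ℤ) ∣ i - i') :
    (ZMa m n r) ^ i = (ZMa m n r) ^ i' := by
  obtain ⟨q, hq⟩ := h
  have : i = i' + m * q := by linarith
  rw [this, zpow_add, zpow_mul, zpow_natCast, ha, one_zpow, mul_one]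

/-- generic conjugation: `b^t * a^k * b^(-t) = a^(r^e * k)` for some natural `e`. -/
lemma conj_general (hn : 0 < n) (t : ℤ) : ∃ e : ℕ, ∀ k : ℤ,
    (ZMb m n r) ^ t * (ZMa m n r) ^ k * (ZMb m n r) ^ (-t) = (ZMa m n r) ^ (r ^ e * k) := by
  have hn' : (0 : ℤ) < n := by exact_mod_cast hn
  refine ⟨((-t) % (n : ℤ)).toNat, fun k => ?_⟩
  set e : ℕ := ((-t) % (n : ℤ)).toNat with he
  have hge : (0:ℤ) ≤ (-t) % (n : ℤ) := Int.emod_nonneg _ hn'.ne'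
  have hee : (e : ℤ) = (-t) % (n : ℤ) := Int.toNat_of_nonneg hge
  have hbt : (ZMb m n r) ^ t = (ZMb m n r) ^ (-(e : ℤ)) := by
    apply hb_zpow_eq_of_dvd
    rw [hee]
    have : t - -((-t) % (n:ℤ)) = (n:ℤ) * (-((-t) / (n:ℤ))) := by
      have := Int.emod_add_mul_ediv (-t) (n : ℤ)
      ring_nf
      linarith
    exact ⟨_, this⟩
  have hbt2 : (ZMb m n r) ^ (-t) = (ZMb m n r) ^ ((e : ℤ)) := by
    rw [zpow_neg, hbt, ← zpow_neg, neg_neg]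
  rw [hbt, hbt2, zpow_neg, zpow_natCast]
  exact conj_bpow m n r e k


lemma mem_closure_pair (hn : 0 < n) (m₁ n₁ : ℕ) (g : ZM m n r) :
    g ∈ Subgroup.closure {ZMa m n r ^ m₁, ZMb m n r ^ n₁} ↔
      ∃ i j : ℤ, g = ZMa m n r ^ ((m₁ : ℤ) * i) * ZMb m n r ^ ((n₁ : ℤ) * j) := by
  constructor
  · intro hg
    induction hg using Subgroup.closure_induction with
    | mem x hx =>
        rcases hx with hx | hx
        · exact ⟨1, 0, by simp [hx, ← zpow_natCast]⟩
        · exact ⟨0, 1, by simp [Set.mem_singleton_iff.1 hx, ← zpow_natCast]⟩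
    | one => exact ⟨0, 0, by simp⟩
    | mul x y hx hy ihx ihy =>
        obtain ⟨i, j, rfl⟩ := ihx
        obtain ⟨i', j', rfl⟩ := ihy
        obtain ⟨e, hce⟩ := conj_general m n r hn ((n₁ : ℤ) * j)
        refine ⟨i + r ^ e * i', j + j', ?_⟩
        have h1 := hce ((m₁ : ℤ) * i')
        have key : ZMa m n r ^ ((m₁:ℤ)*i) * ZMb m n r ^ ((n₁:ℤ)*j) *
            (ZMa m n r ^ ((m₁:ℤ)*i') * ZMb m n r ^ ((n₁:ℤ)*j')) =
            ZMa m n r ^ ((m₁:ℤ)*i) *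
              (ZMb m n r ^ ((n₁:ℤ)*j) * ZMa m n r ^ ((m₁:ℤ)*i') * ZMb m n r ^ (-((n₁:ℤ)*j))) *
              (ZMb m n r ^ ((n₁:ℤ)*j) * ZMb m n r ^ ((n₁:ℤ)*j')) := by
          group
        rw [key, h1, ← zpow_add, ← zpow_add]
        have e1 : (m₁:ℤ)*i + r ^ e * ((m₁:ℤ)*i') = (m₁:ℤ)*(i + r ^ e * i') := by ring
        have e2 : (n₁:ℤ)*j + (n₁:ℤ)*j' = (n₁:ℤ)*(j + j') := by ring
        rw [e1, e2]
    | inv x hx ihx =>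
        obtain ⟨i, j, rfl⟩ := ihx
        obtain ⟨e, hce⟩ := conj_general m n r hn (-((n₁ : ℤ) * j))
        refine ⟨-(r ^ e * i), -j, ?_⟩
        have h1 := hce (-((m₁ : ℤ) * i))
        rw [neg_neg] at h1
        have key : (ZMa m n r ^ ((m₁:ℤ)*i) * ZMb m n r ^ ((n₁:ℤ)*j))⁻¹ =
            (ZMb m n r ^ (-((n₁:ℤ)*j)) * ZMa m n r ^ (-((m₁:ℤ)*i)) * ZMb m n r ^ ((n₁:ℤ)*j)) *
              ZMb m n r ^ (-((n₁:ℤ)*j)) := by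
          group
        rw [key, h1]
        have e1 : r ^ e * -((m₁:ℤ)*i) = (m₁:ℤ)*(-(r ^ e * i)) := by ring
        have e2 : -((n₁:ℤ)*j) = (n₁:ℤ)*(-j) := by ring
        rw [e1, e2]
  · rintro ⟨i, j, rfl⟩
    have h1 : ZMa m n r ^ ((m₁:ℤ) * i) = (ZMa m n r ^ m₁) ^ i := by
      rw [← zpow_natCast (ZMa m n r) m₁, ← zpow_mul]
    have h2 : ZMb m n r ^ ((n₁:ℤ) * j) = (ZMb m n r ^ n₁) ^ j := by
      rw [← zpow_natCast (ZMb m n r) n₁, ← zpow_mul]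
    rw [h1, h2]
    exact mul_mem (zpow_mem (Subgroup.subset_closure (by left; rfl)) i)
      (zpow_mem (Subgroup.subset_closure (by right; rfl)) j)

lemma exists_rep (hn : 0 < n) (g : ZM m n r) :
    ∃ i j : ℤ, g = ZMa m n r ^ i * ZMb m n r ^ j := by
  have hg : g ∈ Subgroup.closure {ZMa m n r ^ 1, ZMb m n r ^ 1} := by
    refine PresentedGroup.generated_by _ _ (fun x => ?_) g
    cases x
    · exact Subgroup.subset_closure (by right; rw [pow_one]; rfl)
    · exact Subgroup.subset_closure (by left; rw [pow_one]; rfl)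
  obtain ⟨i, j, hij⟩ := (mem_closure_pair m n r hn 1 1 g).1 hg
  exact ⟨i, j, by simpa using hij⟩


section Sep

lemma sep (hn : 0 < n) (hr : (m : ℤ) ∣ r ^ n - 1)
    {M N M' N' : ℤ}
    (h : ZMa m n r ^ M * ZMb m n r ^ N = ZMa m n r ^ M' * ZMb m n r ^ N') :
    (M : ZMod m) = (M' : ZMod m) ∧ (N : ZMod n) = (N' : ZMod n) := by
  -- the unit r mod m
  have hru : (r : ZMod m) ^ n = 1 := by
    obtain ⟨c, hc⟩ := hr
    have h2 : ((r ^ n - 1 : ℤ) : ZMod m) = (((m : ℤ) * c : ℤ) : ZMod m) := by rw [hc]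
    push_cast at h2
    rw [ZMod.natCast_self] at h2
    simp at h2
    linear_combination h2
  have hUnit : IsUnit (r : ZMod m) := IsUnit.of_pow_eq_one hru hn.ne'
  set u : (ZMod m)ˣ := hUnit.unit with hudef
  have hu : (u : ZMod m) = (r : ZMod m) := hUnit.unit_spec
  have hun : u ^ n = 1 := by
    ext
    push_cast
    rw [hu, hru]
  -- the permutations
  set A : Equiv.Perm (ZMod m × ZMod n) :=
    Equiv.prodCongr (Equiv.addRight 1) (Equiv.refl _) with hAdef
  set B : Equiv.Perm (ZMod m × ZMod n) :=
    Equiv.prodCongr (MulAction.toPerm u⁻¹) (Equiv.addRight 1) with hBdef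
  have hA : ∀ p : ZMod m × ZMod n, A p = (p.1 + 1, p.2) := fun p => rfl
  have hB : ∀ p : ZMod m × ZMod n, B p = (u⁻¹ • p.1, p.2 + 1) := fun p => rfl
  have hBinv : ∀ p : ZMod m × ZMod n, B⁻¹ p = (u • p.1, p.2 - 1) := by
    intro p
    rw [Equiv.Perm.inv_def, Equiv.symm_apply_eq, hB]
    simp
  have hApow : ∀ (k : ℕ) (p : ZMod m × ZMod n), (A ^ k) p = (p.1 + (k : ZMod m), p.2) := by
    intro k
    induction k with
    | zero => intro p; simp
    | succ w ih =>
        intro p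
        rw [pow_succ', Equiv.Perm.mul_apply, hA, ih]
        push_cast
        rw [add_assoc]
  have hAzpow : ∀ (k : ℤ) (p : ZMod m × ZMod n), (A ^ k) p = (p.1 + (k : ZMod m), p.2) := by
    intro k p
    cases k with
    | ofNat w => rw [Int.ofNat_eq_coe, zpow_natCast, hApow]; push_cast; rfl
    | negSucc w =>
        rw [zpow_negSucc, Equiv.Perm.inv_def, Equiv.symm_apply_eq, hApow]
        ext
        · push_cast; ring
        · rfl
  have hBpow : ∀ (k : ℕ) (p : ZMod m × ZMod n),
      (B ^ k) p = ((u⁻¹) ^ k • p.1, p.2 + (k : ZMod n)) := by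
    intro k
    induction k with
    | zero => intro p; simp
    | succ w ih =>
        intro p
        rw [pow_succ', Equiv.Perm.mul_apply, hB, ih]
        ext
        · simp [pow_succ', mul_smul]
        · push_cast
          simp [add_assoc]
  -- the homomorphism
  have hcheck : ∀ x ∈ ZMrels m n r,
      FreeGroup.lift (fun x : Bool => if x then A else B) x = 1 := by
    intro x hx
    rcases hx with hx | hx | hx
    · rw [hx, map_pow, FreeGroup.lift_apply_of]
      rw [if_pos rfl]
      ext p : 1
      rw [hApow, ZMod.natCast_self, add_zero]
      rfl
    · rw [Set.mem_singleton_iff.1 hx, map_pow, FreeGroup.lift_apply_of]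
      rw [if_neg (by simp)]
      ext p : 1
      rw [hBpow, ZMod.natCast_self, add_zero, inv_pow, hun, inv_one, one_smul]
      rfl
    · rw [Set.mem_singleton_iff.1 hx]
      rw [map_mul, map_mul, map_mul, map_inv, map_zpow, FreeGroup.lift_apply_of, FreeGroup.lift_apply_of]
      rw [if_pos rfl, if_neg (by simp)]
      ext p : 1
      rw [Equiv.Perm.mul_apply, Equiv.Perm.mul_apply, Equiv.Perm.mul_apply, hAzpow, hB, hA,
        hBinv]
      have h1 : u • ((u⁻¹ • ((p.1 + ((-r : ℤ) : ZMod m)))) + 1) = p.1 := by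
        rw [smul_add, smul_inv_smul, Units.smul_def, hu, smul_eq_mul, mul_one]
        push_cast
        ring
      ext
      · exact h1
      · simp
  set f : ZM m n r →* Equiv.Perm (ZMod m × ZMod n) := PresentedGroup.toGroup hcheck with hfdef
  have hfa : f (ZMa m n r) = A := by
    have := PresentedGroup.toGroup.of hcheck (x := true)
    rw [if_pos rfl] at this
    exact this
  have hfb : f (ZMb m n r) = B := by
    have := PresentedGroup.toGroup.of hcheck (x := false)
    rw [if_neg (by simp)] at this
    exact this
  have heval : ∀ I J : ℤ, (f (ZMa m n r ^ I * ZMb m n r ^ J)) ((0 : ZMod m), (0 : ZMod n))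
      = ((I : ZMod m), (J : ZMod n)) := by
    intro I J
    rw [map_mul, map_zpow, map_zpow, hfa, hfb, Equiv.Perm.mul_apply]
    have hBz : (B ^ J) ((0 : ZMod m), (0 : ZMod n)) = ((0 : ZMod m), (J : ZMod n)) := by
      cases J with
      | ofNat w => rw [Int.ofNat_eq_coe, zpow_natCast, hBpow]; simp
      | negSucc w =>
          rw [zpow_negSucc, Equiv.Perm.inv_def, Equiv.symm_apply_eq, hBpow]
          ext
          · simp
          · push_cast; ring
    rw [hBz, hAzpow]
    simp
  have := congrArg (fun g => (f g) ((0 : ZMod m), (0 : ZMod n))) h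
  simp only [heval] at this
  exact ⟨congrArg Prod.fst this, congrArg Prod.snd this⟩

end Sep


lemma card_closure (hm : 0 < m) (hn : 0 < n) (hr : (m : ℤ) ∣ r ^ n - 1)
    (m₁ n₁ : ℕ) (hm₁ : m₁ ∣ m) (hn₁ : n₁ ∣ n) :
    Nat.card (Subgroup.closure {ZMa m n r ^ m₁, ZMb m n r ^ n₁} : Subgroup (ZM m n r))
      = (m / m₁) * (n / n₁) := by
  set N := (Subgroup.closure {ZMa m n r ^ m₁, ZMb m n r ^ n₁} : Subgroup (ZM m n r)) with hN
  have hm₁0 : 0 < m₁ := Nat.pos_of_dvd_of_pos hm₁ hm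
  have hn₁0 : 0 < n₁ := Nat.pos_of_dvd_of_pos hn₁ hn
  set m' := m / m₁ with hm'def
  set n' := n / n₁ with hn'def
  have hmm : m₁ * m' = m := Nat.mul_div_cancel' hm₁
  have hnn : n₁ * n' = n := Nat.mul_div_cancel' hn₁
  have hm'0 : 0 < m' := Nat.div_pos (Nat.le_of_dvd hm hm₁) hm₁0
  have hn'0 : 0 < n' := Nat.div_pos (Nat.le_of_dvd hn hn₁) hn₁0
  haveI : NeZero m' := ⟨hm'0.ne'⟩
  haveI : NeZero n' := ⟨hn'0.ne'⟩
  -- the bijection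
  have hmem : ∀ p : ZMod m' × ZMod n',
      ZMa m n r ^ ((m₁ : ℤ) * (p.1.val : ℤ)) * ZMb m n r ^ ((n₁ : ℤ) * (p.2.val : ℤ)) ∈ N :=
    fun p => (mem_closure_pair m n r hn m₁ n₁ _).2 ⟨(p.1.val : ℤ), (p.2.val : ℤ), rfl⟩
  set F : ZMod m' × ZMod n' → ↥N := fun p => ⟨_, hmem p⟩ with hF
  have hinj : Function.Injective F := by
    intro p q hpq
    have heq : ZMa m n r ^ ((m₁ : ℤ) * (p.1.val : ℤ)) * ZMb m n r ^ ((n₁ : ℤ) * (p.2.val : ℤ))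
        = ZMa m n r ^ ((m₁ : ℤ) * (q.1.val : ℤ)) * ZMb m n r ^ ((n₁ : ℤ) * (q.2.val : ℤ)) :=
      congrArg Subtype.val hpq
    obtain ⟨h1, h2⟩ := sep m n r hn hr heq
    have d1 : (m : ℤ) ∣ (m₁ : ℤ) * (p.1.val : ℤ) - (m₁ : ℤ) * (q.1.val : ℤ) :=
      ((ZMod.intCast_eq_intCast_iff _ _ _).1 h1).symm.dvd
    have d2 : (n : ℤ) ∣ (n₁ : ℤ) * (p.2.val : ℤ) - (n₁ : ℤ) * (q.2.val : ℤ) :=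
      ((ZMod.intCast_eq_intCast_iff _ _ _).1 h2).symm.dvd
    have d1' : (m' : ℤ) ∣ (p.1.val : ℤ) - (q.1.val : ℤ) := by
      have hmc : (m : ℤ) = (m₁ : ℤ) * (m' : ℤ) := by exact_mod_cast hmm.symm
      rw [hmc] at d1
      rw [← mul_sub] at d1
      exact (mul_dvd_mul_iff_left (by exact_mod_cast hm₁0.ne' : (m₁ : ℤ) ≠ 0)).1 d1
    have d2' : (n' : ℤ) ∣ (p.2.val : ℤ) - (q.2.val : ℤ) := by
      have hnc : (n : ℤ) = (n₁ : ℤ) * (n' : ℤ) := by exact_mod_cast hnn.symm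
      rw [hnc] at d2
      rw [← mul_sub] at d2
      exact (mul_dvd_mul_iff_left (by exact_mod_cast hn₁0.ne' : (n₁ : ℤ) ≠ 0)).1 d2
    have e1 : p.1 = q.1 := by
      have : ((p.1.val : ℤ) : ZMod m') = ((q.1.val : ℤ) : ZMod m') :=
        (ZMod.intCast_eq_intCast_iff _ _ _).2 (Int.ModEq.symm (Int.modEq_iff_dvd.2 (by
          simpa using d1')))
      push_cast at this
      rwa [ZMod.natCast_val, ZMod.natCast_val, ZMod.cast_id, ZMod.cast_id] at this
    have e2 : p.2 = q.2 := by
      have : ((p.2.val : ℤ) : ZMod n') = ((q.2.val : ℤ) : ZMod n') :=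
        (ZMod.intCast_eq_intCast_iff _ _ _).2 (Int.ModEq.symm (Int.modEq_iff_dvd.2 (by
          simpa using d2')))
      push_cast at this
      rwa [ZMod.natCast_val, ZMod.natCast_val, ZMod.cast_id, ZMod.cast_id] at this
    exact Prod.ext e1 e2
  have hsurj : Function.Surjective F := by
    rintro ⟨g, hg⟩
    obtain ⟨i, j, rfl⟩ := (mem_closure_pair m n r hn m₁ n₁ g).1 hg
    refine ⟨((i : ZMod m'), (j : ZMod n')), ?_⟩
    apply Subtype.ext
    show ZMa m n r ^ ((m₁:ℤ) * (((i : ZMod m')).val : ℤ)) *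
        ZMb m n r ^ ((n₁:ℤ) * (((j : ZMod n')).val : ℤ))
      = ZMa m n r ^ ((m₁:ℤ) * i) * ZMb m n r ^ ((n₁:ℤ) * j)
    have hv1 : (((i : ZMod m')).val : ℤ) = i % (m' : ℤ) := ZMod.val_intCast i
    have hv2 : (((j : ZMod n')).val : ℤ) = j % (n' : ℤ) := ZMod.val_intCast j
    have c1 : ZMa m n r ^ ((m₁:ℤ) * (((i : ZMod m')).val : ℤ)) = ZMa m n r ^ ((m₁:ℤ) * i) := by
      apply ha_zpow_eq_of_dvd
      rw [hv1]
      have : (m₁:ℤ) * (i % (m':ℤ)) - (m₁:ℤ) * i = (m:ℤ) * (-(i / (m':ℤ))) := by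
        have h3 := Int.emod_add_mul_ediv i (m' : ℤ)
        have hmc : (m : ℤ) = (m₁ : ℤ) * (m' : ℤ) := by exact_mod_cast hmm.symm
        rw [hmc]
        ring_nf
        nlinarith [h3]
      exact ⟨_, this⟩
    have c2 : ZMb m n r ^ ((n₁:ℤ) * (((j : ZMod n')).val : ℤ)) = ZMb m n r ^ ((n₁:ℤ) * j) := by
      apply hb_zpow_eq_of_dvd
      rw [hv2]
      have : (n₁:ℤ) * (j % (n':ℤ)) - (n₁:ℤ) * j = (n:ℤ) * (-(j / (n':ℤ))) := by
        have h3 := Int.emod_add_mul_ediv j (n' : ℤ)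
        have hnc : (n : ℤ) = (n₁ : ℤ) * (n' : ℤ) := by exact_mod_cast hnn.symm
        rw [hnc]
        ring_nf
        nlinarith [h3]
      exact ⟨_, this⟩
    rw [c1, c2]
  have hcard := Nat.card_eq_of_bijective F ⟨hinj, hsurj⟩
  rw [← hcard, Nat.card_prod, Nat.card_zmod, Nat.card_zmod]


lemma conj_mem_closure_of_gens {G : Type*} [Group G] (S : Set G) (x : G)
    (h : ∀ s ∈ S, x * s * x⁻¹ ∈ Subgroup.closure S) :
    ∀ g ∈ Subgroup.closure S, x * g * x⁻¹ ∈ Subgroup.closure S := by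
  intro g hg
  induction hg using Subgroup.closure_induction with
  | mem s hs => exact h s hs
  | one => simpa using one_mem _
  | mul a b ha hb iha ihb =>
      have e : x * (a * b) * x⁻¹ = (x * a * x⁻¹) * (x * b * x⁻¹) := by group
      rw [e]; exact mul_mem iha ihb
  | inv a ha iha =>
      have e : x * a⁻¹ * x⁻¹ = (x * a * x⁻¹)⁻¹ := by group
      rw [e]; exact inv_mem iha

lemma normal_closure_pair (hm : 0 < m) (hn : 0 < n) (hr : (m : ℤ) ∣ r ^ n - 1)
    (m₁ n₁ : ℕ) (hn₁ : n₁ ∣ n) (hm₁m : (m₁ : ℤ) ∣ (m : ℤ)) (hm₁r : (m₁ : ℤ) ∣ r ^ n₁ - 1) :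
    (Subgroup.closure {ZMa m n r ^ m₁, ZMb m n r ^ n₁} : Subgroup (ZM m n r)).Normal := by
  set N := (Subgroup.closure {ZMa m n r ^ m₁, ZMb m n r ^ n₁} : Subgroup (ZM m n r)) with hN
  have hn₁n : n₁ ≤ n := Nat.le_of_dvd hn hn₁
  have haInN : ∀ k : ℤ, (m₁ : ℤ) ∣ k → ZMa m n r ^ k ∈ N := by
    rintro k ⟨t, rfl⟩
    exact (mem_closure_pair m n r hn m₁ n₁ _).2 ⟨t, 0, by simp⟩
  have hbInN : ZMb m n r ^ n₁ ∈ N := Subgroup.subset_closure (by right; rfl)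
  have haInN' : ZMa m n r ^ m₁ ∈ N := Subgroup.subset_closure (by left; rfl)
  -- key divisibility
  have hd : (m₁ : ℤ) ∣ r ^ (n - n₁) - 1 := by
    have hiden : r ^ (n - n₁) * r ^ n₁ = r ^ n := by
      rw [← pow_add, Nat.sub_add_cancel hn₁n]
    have : r ^ (n - n₁) - 1 = (r ^ n - 1) - r ^ (n - n₁) * (r ^ n₁ - 1) := by
      rw [mul_sub, hiden]; ring
    rw [this]
    exact dvd_sub (hm₁m.trans hr) (Dvd.dvd.mul_left hm₁r _)
  -- conjugation formulas
  have hbeq : ZMb m n r ^ n₁ = (ZMb m n r ^ (n - n₁))⁻¹ := by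
    rw [eq_inv_iff_mul_eq_one, ← pow_add, Nat.add_sub_cancel' hn₁n, hb]
  have hconj3 : ∀ k : ℤ, (ZMb m n r ^ n₁) * ZMa m n r ^ k * (ZMb m n r ^ n₁)⁻¹
      = ZMa m n r ^ (r ^ (n - n₁) * k) := by
    intro k
    rw [hbeq, inv_inv]
    exact conj_bpow m n r (n - n₁) k
  have hb1eq : ZMb m n r = (ZMb m n r ^ (n - 1))⁻¹ := by
    rw [eq_inv_iff_mul_eq_one, ← pow_succ', Nat.sub_add_cancel hn, hb]
  have hconj2 : ∀ k : ℤ, ZMb m n r * ZMa m n r ^ k * (ZMb m n r)⁻¹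
      = ZMa m n r ^ (r ^ (n - 1) * k) := by
    intro k
    rw [hb1eq, inv_inv]
    exact conj_bpow m n r (n - 1) k
  -- generator conjugation facts
  have fact_a : ∀ s ∈ ({ZMa m n r ^ m₁, ZMb m n r ^ n₁} : Set (ZM m n r)),
      ZMa m n r * s * (ZMa m n r)⁻¹ ∈ N := by
    rintro s (rfl | hs)
    · have e : ZMa m n r * ZMa m n r ^ m₁ * (ZMa m n r)⁻¹ = ZMa m n r ^ m₁ := by group
      rw [e]; exact haInN'
    · rw [Set.mem_singleton_iff.1 hs]
      have e : ZMa m n r * ZMb m n r ^ n₁ * (ZMa m n r)⁻¹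
          = ZMa m n r ^ (1 : ℤ) *
            ((ZMb m n r ^ n₁) * ZMa m n r ^ (-1 : ℤ) * (ZMb m n r ^ n₁)⁻¹) *
            ZMb m n r ^ n₁ := by group
      rw [e, hconj3, ← zpow_add]
      exact mul_mem (haInN _ (by
        have : (1 : ℤ) + r ^ (n - n₁) * -1 = -(r ^ (n - n₁) - 1) := by ring
        rw [this]; exact dvd_neg.2 hd)) hbInN
  have fact_ainv : ∀ s ∈ ({ZMa m n r ^ m₁, ZMb m n r ^ n₁} : Set (ZM m n r)),
      (ZMa m n r)⁻¹ * s * ((ZMa m n r)⁻¹)⁻¹ ∈ N := by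
    rintro s (rfl | hs)
    · have e : (ZMa m n r)⁻¹ * ZMa m n r ^ m₁ * ((ZMa m n r)⁻¹)⁻¹ = ZMa m n r ^ m₁ := by group
      rw [e]; exact haInN'
    · rw [Set.mem_singleton_iff.1 hs]
      have e : (ZMa m n r)⁻¹ * ZMb m n r ^ n₁ * ((ZMa m n r)⁻¹)⁻¹
          = ZMa m n r ^ (-1 : ℤ) *
            ((ZMb m n r ^ n₁) * ZMa m n r ^ (1 : ℤ) * (ZMb m n r ^ n₁)⁻¹) *
            ZMb m n r ^ n₁ := by group
      rw [e, hconj3, ← zpow_add]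
      exact mul_mem (haInN _ (by
        have : (-1 : ℤ) + r ^ (n - n₁) * 1 = r ^ (n - n₁) - 1 := by ring
        rw [this]; exact hd)) hbInN
  have fact_b : ∀ s ∈ ({ZMa m n r ^ m₁, ZMb m n r ^ n₁} : Set (ZM m n r)),
      ZMb m n r * s * (ZMb m n r)⁻¹ ∈ N := by
    rintro s (rfl | hs)
    · have e : ZMb m n r * ZMa m n r ^ m₁ * (ZMb m n r)⁻¹
          = ZMb m n r * ZMa m n r ^ ((m₁ : ℤ)) * (ZMb m n r)⁻¹ := by rw [zpow_natCast]
      rw [e, hconj2]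
      exact haInN _ ⟨r ^ (n - 1), by ring⟩
    · rw [Set.mem_singleton_iff.1 hs]
      have e : ZMb m n r * ZMb m n r ^ n₁ * (ZMb m n r)⁻¹ = ZMb m n r ^ n₁ := by group
      rw [e]; exact hbInN
  have fact_binv : ∀ s ∈ ({ZMa m n r ^ m₁, ZMb m n r ^ n₁} : Set (ZM m n r)),
      (ZMb m n r)⁻¹ * s * ((ZMb m n r)⁻¹)⁻¹ ∈ N := by
    rintro s (rfl | hs)
    · have e : (ZMb m n r)⁻¹ * ZMa m n r ^ m₁ * ((ZMb m n r)⁻¹)⁻¹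
          = (ZMb m n r)⁻¹ * ZMa m n r ^ ((m₁ : ℤ)) * ZMb m n r := by
        rw [zpow_natCast, inv_inv]
      rw [e, conj_b]
      exact haInN _ ⟨r, by ring⟩
    · rw [Set.mem_singleton_iff.1 hs]
      have e : (ZMb m n r)⁻¹ * ZMb m n r ^ n₁ * ((ZMb m n r)⁻¹)⁻¹ = ZMb m n r ^ n₁ := by group
      rw [e]; exact hbInN
  -- main induction
  have main : ∀ x ∈ Subgroup.closure ({ZMa m n r, ZMb m n r} : Set (ZM m n r)),
      (∀ g ∈ N, x * g * x⁻¹ ∈ N) ∧ (∀ g ∈ N, x⁻¹ * g * x ∈ N) := by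
    intro x hx
    induction hx using Subgroup.closure_induction with
    | mem s hs =>
        rcases hs with rfl | hs
        · exact ⟨conj_mem_closure_of_gens _ _ fact_a,
            fun g hg => by simpa using conj_mem_closure_of_gens _ _ fact_ainv g hg⟩
        · rw [Set.mem_singleton_iff.1 hs]
          exact ⟨conj_mem_closure_of_gens _ _ fact_b,
            fun g hg => by simpa using conj_mem_closure_of_gens _ _ fact_binv g hg⟩
    | one => exact ⟨fun g hg => by simpa using hg, fun g hg => by simpa using hg⟩
    | mul x y hx hy ihx ihy =>
        constructor
        · intro g hg
          have e : x * y * g * (x * y)⁻¹ = x * (y * g * y⁻¹) * x⁻¹ := by group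
          rw [e]; exact ihx.1 _ (ihy.1 g hg)
        · intro g hg
          have e : (x * y)⁻¹ * g * (x * y) = y⁻¹ * (x⁻¹ * g * x) * y := by group
          rw [e]; exact ihy.2 _ (ihx.2 g hg)
    | inv x hx ihx =>
        constructor
        · intro g hg
          have e : x⁻¹ * g * (x⁻¹)⁻¹ = x⁻¹ * g * x := by group
          rw [e]; exact ihx.2 g hg
        · intro g hg
          have e : (x⁻¹)⁻¹ * g * x⁻¹ = x * g * x⁻¹ := by group
          rw [e]; exact ihx.1 g hg
  constructor
  intro g hg x
  have hx : x ∈ Subgroup.closure ({ZMa m n r, ZMb m n r} : Set (ZM m n r)) := by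
    refine PresentedGroup.generated_by _ _ (fun y => ?_) x
    cases y
    · exact Subgroup.subset_closure (by right; rfl)
    · exact Subgroup.subset_closure (by left; rfl)
  exact (main x hx).1 g hg


lemma part1 (hm : 0 < m) (hn : 0 < n) (hco2 : IsCoprime (m : ℤ) (r - 1))
    (hr : (m : ℤ) ∣ r ^ n - 1) (H : Subgroup (ZM m n r)) (hH : H.Normal) :
    ∃ m₁ n₁ : ℕ, n₁ ∣ n ∧ m₁ ∣ Int.gcd (m : ℤ) (r ^ n₁ - 1) ∧
      H = Subgroup.closure {ZMa m n r ^ m₁, ZMb m n r ^ n₁} := by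
  classical
  -- the subgroup of exponents of a lying in H
  set Ma : AddSubgroup ℤ :=
    { carrier := {i : ℤ | ZMa m n r ^ i ∈ H}
      zero_mem' := by simp only [Set.mem_setOf_eq, zpow_zero]; exact one_mem H
      add_mem' := by
        intro x y hx hy
        simp only [Set.mem_setOf_eq] at *
        rw [zpow_add]; exact mul_mem hx hy
      neg_mem' := by
        intro x hx
        simp only [Set.mem_setOf_eq] at *
        rw [zpow_neg]; exact inv_mem hx } with hMadef
  obtain ⟨c, hc⟩ := Int.subgroup_cyclic Ma
  set m₁ := c.natAbs with hm₁def
  have hMa : ∀ i : ℤ, ZMa m n r ^ i ∈ H ↔ (m₁ : ℤ) ∣ i := by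
    intro i
    have h1 : ZMa m n r ^ i ∈ H ↔ i ∈ Ma := Iff.rfl
    rw [h1, hc, AddSubgroup.mem_closure_singleton, hm₁def, Int.natAbs_dvd]
    constructor
    · rintro ⟨k, rfl⟩; exact Dvd.intro_left k rfl
    · rintro ⟨k, rfl⟩; exact ⟨k, by rw [smul_eq_mul]; ring⟩
  have hm₁m : (m₁ : ℤ) ∣ (m : ℤ) := by
    rw [← hMa]
    rw [zpow_natCast, ha]
    exact one_mem H
  -- the subgroup of exponents of b appearing in H
  set J : AddSubgroup ℤ :=
    { carrier := {j : ℤ | ∃ i : ℤ, ZMa m n r ^ i * ZMb m n r ^ j ∈ H}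
      zero_mem' := ⟨0, by simp only [zpow_zero, mul_one]; exact one_mem H⟩
      add_mem' := by
        rintro x y ⟨i, hi⟩ ⟨i', hi'⟩
        obtain ⟨e, hce⟩ := conj_general m n r hn x
        refine ⟨i + r ^ e * i', ?_⟩
        have hmul := mul_mem hi hi'
        have key : ZMa m n r ^ i * ZMb m n r ^ x * (ZMa m n r ^ i' * ZMb m n r ^ y) =
            ZMa m n r ^ i * (ZMb m n r ^ x * ZMa m n r ^ i' * ZMb m n r ^ (-x)) *
              (ZMb m n r ^ x * ZMb m n r ^ y) := by group
        rw [key, hce i', ← zpow_add, ← zpow_add] at hmul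
        exact hmul
      neg_mem' := by
        rintro x ⟨i, hi⟩
        obtain ⟨e, hce⟩ := conj_general m n r hn (-x)
        rw [neg_neg] at hce
        refine ⟨r ^ e * (-i), ?_⟩
        have hinv := inv_mem hi
        have key : (ZMa m n r ^ i * ZMb m n r ^ x)⁻¹ =
            (ZMb m n r ^ (-x) * ZMa m n r ^ (-i) * ZMb m n r ^ x) * ZMb m n r ^ (-x) := by
          group
        rw [key, hce (-i)] at hinv
        exact hinv } with hJdef
  obtain ⟨d, hdc⟩ := Int.subgroup_cyclic J
  set n₁ := d.natAbs with hn₁def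
  have hJ : ∀ j : ℤ, (∃ i : ℤ, ZMa m n r ^ i * ZMb m n r ^ j ∈ H) ↔ (n₁ : ℤ) ∣ j := by
    intro j
    have h1 : (∃ i : ℤ, ZMa m n r ^ i * ZMb m n r ^ j ∈ H) ↔ j ∈ J := Iff.rfl
    rw [h1, hdc, AddSubgroup.mem_closure_singleton, hn₁def, Int.natAbs_dvd]
    constructor
    · rintro ⟨k, rfl⟩; exact Dvd.intro_left k rfl
    · rintro ⟨k, rfl⟩; exact ⟨k, by rw [smul_eq_mul]; ring⟩
  have hn₁n : n₁ ∣ n := by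
    have : (n₁ : ℤ) ∣ (n : ℤ) := by
      rw [← hJ]
      exact ⟨0, by rw [zpow_zero, one_mul, zpow_natCast, hb]; exact one_mem H⟩
    exact_mod_cast this
  obtain ⟨s, hs⟩ : ∃ i : ℤ, ZMa m n r ^ i * ZMb m n r ^ ((n₁ : ℤ)) ∈ H := (hJ _).2 dvd_rfl
  -- m₁ divides r ^ n₁ - 1
  have hm₁r : (m₁ : ℤ) ∣ r ^ n₁ - 1 := by
    have hg₁ := mul_mem (inv_mem hs) (hH.conj_mem _ hs (ZMa m n r))
    have key : (ZMa m n r ^ s * ZMb m n r ^ ((n₁ : ℤ)))⁻¹ *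
        (ZMa m n r * (ZMa m n r ^ s * ZMb m n r ^ ((n₁ : ℤ))) * (ZMa m n r)⁻¹) =
        ((ZMb m n r ^ n₁)⁻¹ * ZMa m n r ^ (1 : ℤ) * ZMb m n r ^ n₁) * ZMa m n r ^ (-1 : ℤ) := by
      rw [← zpow_natCast (ZMb m n r) n₁]
      group
    rw [key, conj_bpow, ← zpow_add] at hg₁
    have := (hMa _).1 hg₁
    simpa [← sub_eq_add_neg] using this
  have hgcd : m₁ ∣ Int.gcd (m : ℤ) (r ^ n₁ - 1) := by
    apply Nat.dvd_gcd
    · exact_mod_cast hm₁m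
    · have := Int.natAbs_dvd_natAbs.2 hm₁r
      simpa using this
  -- m₁ divides s
  have hm₁s : (m₁ : ℤ) ∣ s := by
    have hg₂ := mul_mem (inv_mem hs) (hH.conj_mem _ hs (ZMb m n r)⁻¹)
    rw [inv_inv] at hg₂
    have key : (ZMa m n r ^ s * ZMb m n r ^ ((n₁ : ℤ)))⁻¹ *
        ((ZMb m n r)⁻¹ * (ZMa m n r ^ s * ZMb m n r ^ ((n₁ : ℤ))) * ZMb m n r) =
        (ZMb m n r ^ n₁)⁻¹ * (ZMa m n r ^ (-s) * ((ZMb m n r)⁻¹ * ZMa m n r ^ s * ZMb m n r)) *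
          ZMb m n r ^ n₁ := by
      rw [← zpow_natCast (ZMb m n r) n₁]
      group
    rw [key, conj_b, ← zpow_add] at hg₂
    have key2 : (ZMb m n r ^ n₁)⁻¹ * ZMa m n r ^ (-s + r * s) * ZMb m n r ^ n₁ =
        ZMa m n r ^ (r ^ n₁ * (-s + r * s)) := conj_bpow m n r n₁ _
    rw [key2] at hg₂
    have hdvd := (hMa _).1 hg₂
    have hcop1 : IsCoprime ((m₁ : ℤ)) (r ^ n₁) := by
      obtain ⟨t, ht⟩ := hm₁r
      exact ⟨-t, 1, by linarith⟩
    have hcop2 : IsCoprime ((m₁ : ℤ)) (r - 1) :=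
      IsCoprime.of_isCoprime_of_dvd_left hco2 hm₁m
    have h1 : (m₁ : ℤ) ∣ -s + r * s := hcop1.dvd_of_dvd_mul_left hdvd
    have h2 : -s + r * s = s * (r - 1) := by ring
    rw [h2] at h1
    exact hcop2.dvd_of_dvd_mul_right h1
  have has : ZMa m n r ^ s ∈ H := (hMa s).2 hm₁s
  have hbn₁ : ZMb m n r ^ ((n₁ : ℤ)) ∈ H := by
    have := mul_mem (inv_mem has) hs
    rwa [inv_mul_cancel_left] at this
  refine ⟨m₁, n₁, hn₁n, hgcd, le_antisymm ?_ ?_⟩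
  · -- H ≤ closure
    intro h hh
    obtain ⟨i, j, rfl⟩ := exists_rep m n r hn h
    have hj : (n₁ : ℤ) ∣ j := (hJ j).1 ⟨i, hh⟩
    obtain ⟨t, rfl⟩ := hj
    have hbj : ZMb m n r ^ ((n₁ : ℤ) * t) ∈ H := by
      rw [zpow_mul]
      exact zpow_mem hbn₁ t
    have hai : ZMa m n r ^ i ∈ H := by
      have := mul_mem hh (inv_mem hbj)
      rwa [mul_inv_cancel_right] at this
    have hi : (m₁ : ℤ) ∣ i := (hMa i).1 hai
    obtain ⟨w, rfl⟩ := hi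
    exact (mem_closure_pair m n r hn m₁ n₁ _).2 ⟨w, t, rfl⟩
  · -- closure ≤ H
    rw [Subgroup.closure_le]
    rintro x (rfl | hx)
    · show ZMa m n r ^ m₁ ∈ H
      rw [← zpow_natCast]
      exact (hMa _).2 dvd_rfl
    · rw [Set.mem_singleton_iff.1 hx]
      show ZMb m n r ^ n₁ ∈ H
      rw [← zpow_natCast]
      exact hbn₁

end ZMW

theorem stmt5 (m n : ℕ) (r : ℤ) (hm : 0 < m) (hn : 0 < n)
    (hco : Nat.Coprime m n) (hco2 : IsCoprime (m : ℤ) (r - 1))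
    (hr : (m : ℤ) ∣ r ^ n - 1) :
    (∀ H : Subgroup (ZM m n r), H.Normal →
      ∃ m₁ n₁ : ℕ, n₁ ∣ n ∧ m₁ ∣ Int.gcd (m : ℤ) (r ^ n₁ - 1) ∧
        H = Subgroup.closure {ZMa m n r ^ m₁, ZMb m n r ^ n₁}) ∧
    (∀ m₁ n₁ : ℕ, n₁ ∣ n → m₁ ∣ Int.gcd (m : ℤ) (r ^ n₁ - 1) →
      (Subgroup.closure {ZMa m n r ^ m₁, ZMb m n r ^ n₁} : Subgroup (ZM m n r)).Normal) ∧
    (∀ m₁ n₁ : ℕ, m₁ ∣ m → n₁ ∣ n →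
      ∀ H K : Subgroup (ZM m n r), H.Normal → K.Normal →
        Nat.card H = m * n / (m₁ * n₁) → Nat.card K = m * n / (m₁ * n₁) → H = K) := by
  have dvd_of_gcd : ∀ (m₁ n₁ : ℕ), m₁ ∣ Int.gcd (m : ℤ) (r ^ n₁ - 1) →
      (m₁ : ℤ) ∣ (m : ℤ) ∧ (m₁ : ℤ) ∣ r ^ n₁ - 1 := by
    intro m₁ n₁ h
    have h' : (m₁ : ℤ) ∣ (Int.gcd (m : ℤ) (r ^ n₁ - 1) : ℤ) := Int.natCast_dvd_natCast.2 h
    exact ⟨h'.trans (Int.gcd_dvd_left _ _), h'.trans (Int.gcd_dvd_right _ _)⟩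
  refine ⟨fun H hH => ZMW.part1 m n r hm hn hco2 hr H hH, fun m₁ n₁ hn₁ hm₁ => ?_, ?_⟩
  · obtain ⟨h1, h2⟩ := dvd_of_gcd m₁ n₁ hm₁
    exact ZMW.normal_closure_pair m n r hm hn hr m₁ n₁ hn₁ h1 h2
  · intro m₁ n₁ _ _ H K hHn hKn hHc hKc
    obtain ⟨mh, nh, hnh, hmh, rfl⟩ := ZMW.part1 m n r hm hn hco2 hr H hHn
    obtain ⟨mk, nk, hnk, hmk, rfl⟩ := ZMW.part1 m n r hm hn hco2 hr K hKn
    have hmhm : mh ∣ m := by exact_mod_cast (dvd_of_gcd mh nh hmh).1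
    have hmkm : mk ∣ m := by exact_mod_cast (dvd_of_gcd mk nk hmk).1
    have e1 := ZMW.card_closure m n r hm hn hr mh nh hmhm hnh
    have e2 := ZMW.card_closure m n r hm hn hr mk nk hmkm hnk
    have ecard : (m / mh) * (n / nh) = (m / mk) * (n / nk) := by
      rw [← e1, ← e2, hHc, hKc]
    -- deduce mh = mk and nh = nk
    have humh : m / mh ∣ m := Nat.div_dvd_of_dvd hmhm
    have humk : m / mk ∣ m := Nat.div_dvd_of_dvd hmkm
    have hvnh : n / nh ∣ n := Nat.div_dvd_of_dvd hnh
    have hvnk : n / nk ∣ n := Nat.div_dvd_of_dvd hnk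
    have hcoph : Nat.Coprime (n / nh) m := Nat.Coprime.coprime_dvd_left hvnh hco.symm
    have hcopk : Nat.Coprime (n / nk) m := Nat.Coprime.coprime_dvd_left hvnk hco.symm
    have hu : m / mh = m / mk := by
      have g1 : Nat.gcd ((m / mh) * (n / nh)) m = m / mh := by
        rw [mul_comm, Nat.Coprime.gcd_mul_left_cancel _ hcoph]
        exact Nat.gcd_eq_left humh
      have g2 : Nat.gcd ((m / mk) * (n / nk)) m = m / mk := by
        rw [mul_comm, Nat.Coprime.gcd_mul_left_cancel _ hcopk]
        exact Nat.gcd_eq_left humk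
      rw [← g1, ← g2, ecard]
    have hmheq : mh = mk := by
      have h1 : mh = m / (m / mh) := (Nat.div_div_self hmhm hm.ne').symm
      have h2 : mk = m / (m / mk) := (Nat.div_div_self hmkm hm.ne').symm
      rw [h1, h2, hu]
    have hupos : 0 < m / mh := Nat.div_pos (Nat.le_of_dvd hm hmhm)
      (Nat.pos_of_dvd_of_pos hmhm hm)
    have hv : n / nh = n / nk := by
      apply Nat.eq_of_mul_eq_mul_left hupos
      rw [ecard, hu]
    have hnheq : nh = nk := by
      have h1 : nh = n / (n / nh) := (Nat.div_div_self hnh hn.ne').symm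
      have h2 : nk = n / (n / nk) := (Nat.div_div_self hnk hn.ne').symm
      rw [h1, h2, hv]
    rw [hmheq, hnheq]
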